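/- Puget's bound consistency characterization: the constraint alldifferent(x_1,...,x_n) with nonempty integer domains is bound consistent if and only if (1) for every integer interval I, the number of variables i with D_i ⊆ I is at most |I|, and (2) for every Hall interval I (an interval with |I| equal to the number of variables whose domain is contained in I), every variable x_i with D_i ⊄ I satisfies {min D_i, max D_i} ∩ I = ∅. -/
import Mathlib

lemma domain_subset_Icc_iff {s : Finset ℤ} (hs : s.Nonempty) {a b : ℤ} :
    s ⊆ Finset.Icc a b ↔ a ≤ s.min' hs ∧ s.max' hs ≤ b := by
  constructor
  · intro h
    exact ⟨(Finset.mem_Icc.mp (h (s.min'_mem hs))).1,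
      (Finset.mem_Icc.mp (h (s.max'_mem hs))).2⟩
  · rintro ⟨h1, h2⟩ x hx
    exact Finset.mem_Icc.mpr ⟨h1.trans (s.min'_le x hx), (s.le_max' x hx).trans h2⟩

/-- Hall's condition for an interval family follows from the interval condition. -/
lemma interval_hall {n : ℕ} (l u : Fin n → ℤ) (hlu : ∀ j, l j ≤ u j)
    (H : ∀ a b : ℤ, (Finset.univ.filter (fun j => a ≤ l j ∧ u j ≤ b)).card ≤
      (Finset.Icc a b).card) :
    ∀ S : Finset (Fin n), S.card ≤ (S.biUnion (fun j => Finset.Icc (l j) (u j))).card := by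
  intro S
  induction S using Finset.strongInductionOn with
  | _ S ih =>
  rcases S.eq_empty_or_nonempty with rfl | hS
  · simp
  set U := S.biUnion (fun j => Finset.Icc (l j) (u j)) with hU
  set a := S.inf' hS l with ha
  set b := S.sup' hS u with hb
  have hUsub : U ⊆ Finset.Icc a b := by
    intro x hx
    rw [hU, Finset.mem_biUnion] at hx
    obtain ⟨j, hjS, hj⟩ := hx
    rw [Finset.mem_Icc] at hj ⊢
    exact ⟨le_trans (Finset.inf'_le l hjS) hj.1, le_trans hj.2 (Finset.le_sup' u hjS)⟩
  by_cases hcase : Finset.Icc a b ⊆ U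
  · have hEq : U = Finset.Icc a b := Finset.Subset.antisymm hUsub hcase
    have hsub : S ⊆ Finset.univ.filter (fun j => a ≤ l j ∧ u j ≤ b) := by
      intro j hj
      simp only [Finset.mem_filter, Finset.mem_univ, true_and]
      exact ⟨Finset.inf'_le l hj, Finset.le_sup' u hj⟩
    calc S.card ≤ _ := Finset.card_le_card hsub
      _ ≤ (Finset.Icc a b).card := H a b
      _ = U.card := by rw [hEq]
  · obtain ⟨c, hcI, hcU⟩ := Finset.not_subset.mp hcase
    rw [Finset.mem_Icc] at hcI
    set S1 := S.filter (fun j => u j < c) with hS1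
    set S2 := S.filter (fun j => c < l j) with hS2
    have hmemgap : ∀ j ∈ S, ¬ (l j ≤ c ∧ c ≤ u j) := by
      intro j hj hcon
      exact hcU (Finset.mem_biUnion.mpr ⟨j, hj, Finset.mem_Icc.mpr hcon⟩)
    have hsplit : S = S1 ∪ S2 := by
      apply Finset.Subset.antisymm
      · intro j hj
        rcases lt_or_ge (u j) c with h | h
        · exact Finset.mem_union_left _ (Finset.mem_filter.mpr ⟨hj, h⟩)
        · rcases lt_or_ge c (l j) with h' | h'
          · exact Finset.mem_union_right _ (Finset.mem_filter.mpr ⟨hj, h'⟩)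
          · exact absurd ⟨h', h⟩ (hmemgap j hj)
      · exact Finset.union_subset (Finset.filter_subset _ _) (Finset.filter_subset _ _)
    have hdisj : Disjoint S1 S2 := by
      rw [Finset.disjoint_left]
      intro j h1 h2
      rw [hS1, Finset.mem_filter] at h1
      rw [hS2, Finset.mem_filter] at h2
      exact absurd (h2.2.trans_le ((hlu j).trans h1.2.le)) (lt_irrefl c)
    obtain ⟨j2, hj2S, hj2⟩ := Finset.exists_mem_eq_sup' hS u
    obtain ⟨j1, hj1S, hj1⟩ := Finset.exists_mem_eq_inf' hS l
    have hj2n : j2 ∉ S1 := by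
      rw [hS1, Finset.mem_filter]
      rintro ⟨-, h⟩
      have : c ≤ u j2 := by rw [← hj2]; exact hcI.2
      exact absurd h (not_lt.mpr this)
    have hj1n : j1 ∉ S2 := by
      rw [hS2, Finset.mem_filter]
      rintro ⟨-, h⟩
      have : l j1 ≤ c := by rw [← hj1]; exact hcI.1
      exact absurd h (not_lt.mpr this)
    have hss1 : S1 ⊂ S :=
      (Finset.ssubset_iff_of_subset (Finset.filter_subset _ _)).mpr ⟨j2, hj2S, hj2n⟩
    have hss2 : S2 ⊂ S :=
      (Finset.ssubset_iff_of_subset (Finset.filter_subset _ _)).mpr ⟨j1, hj1S, hj1n⟩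
    have h1 := ih S1 hss1
    have h2 := ih S2 hss2
    have hUdisj : Disjoint (S1.biUnion (fun j => Finset.Icc (l j) (u j)))
        (S2.biUnion (fun j => Finset.Icc (l j) (u j))) := by
      rw [Finset.disjoint_left]
      intro x hx1 hx2
      rw [Finset.mem_biUnion] at hx1 hx2
      obtain ⟨j, hj, hxj⟩ := hx1
      obtain ⟨k, hk, hxk⟩ := hx2
      rw [hS1, Finset.mem_filter] at hj
      rw [hS2, Finset.mem_filter] at hk
      rw [Finset.mem_Icc] at hxj hxk
      exact absurd ((hxj.2.trans_lt hj.2).trans (hk.2.trans_le hxk.1)) (lt_irrefl x)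
    have hUsub' : S1.biUnion (fun j => Finset.Icc (l j) (u j)) ∪
        S2.biUnion (fun j => Finset.Icc (l j) (u j)) ⊆ U := by
      rw [hU, hsplit]
      exact Finset.union_subset
        (Finset.biUnion_subset_biUnion_of_subset_left _ Finset.subset_union_left)
        (Finset.biUnion_subset_biUnion_of_subset_left _ Finset.subset_union_right)
    calc S.card = S1.card + S2.card := by
          rw [hsplit, Finset.card_union_of_disjoint hdisj]
      _ ≤ (S1.biUnion (fun j => Finset.Icc (l j) (u j))).card +
          (S2.biUnion (fun j => Finset.Icc (l j) (u j))).card := Nat.add_le_add h1 h2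
      _ = ((S1.biUnion (fun j => Finset.Icc (l j) (u j))) ∪
          (S2.biUnion (fun j => Finset.Icc (l j) (u j)))).card :=
            (Finset.card_union_of_disjoint hUdisj).symm
      _ ≤ U.card := Finset.card_le_card hUsub'

/-- Bound consistency of `alldifferent` on integer domains. -/
def BoundConsistent {n : ℕ} (D : Fin n → Finset ℤ) (hne : ∀ i, (D i).Nonempty) : Prop :=
  ∀ i : Fin n, ∀ v ∈ ({(D i).min' (hne i), (D i).max' (hne i)} : Finset ℤ),
    ∃ d : Fin n → ℤ, d i = v ∧
      (∀ j, d j ∈ Finset.Icc ((D j).min' (hne j)) ((D j).max' (hne j))) ∧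
      Function.Injective d

/-- Puget's characterization of bound consistency: `alldifferent` is bound
consistent iff (1) for every integer interval `I = [a,b]`, the number of
variables whose domain is contained in `I` is at most `|I|`, and (2) for every
Hall interval `I`, no variable whose domain is not contained in `I` has its
minimum or maximum in `I`. -/
theorem puget_bound_consistency {n : ℕ} (D : Fin n → Finset ℤ)
    (hne : ∀ i, (D i).Nonempty) :
    BoundConsistent D hne ↔
      ((∀ a b : ℤ,
          (Finset.univ.filter (fun i : Fin n => D i ⊆ Finset.Icc a b)).card ≤
            (Finset.Icc a b).card) ∧
       (∀ a b : ℤ,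
          (Finset.Icc a b).card =
            (Finset.univ.filter (fun i : Fin n => D i ⊆ Finset.Icc a b)).card →
          ∀ i : Fin n, ¬ D i ⊆ Finset.Icc a b →
            ({(D i).min' (hne i), (D i).max' (hne i)} : Finset ℤ) ∩
              Finset.Icc a b = ∅)) := by
  constructor
  · intro hBC
    have image_sub : ∀ (d : Fin n → ℤ),
        (∀ j, d j ∈ Finset.Icc ((D j).min' (hne j)) ((D j).max' (hne j))) →
        ∀ a b : ℤ, ∀ j : Fin n, D j ⊆ Finset.Icc a b → d j ∈ Finset.Icc a b := by
      intro d hdom a b j hj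
      obtain ⟨h1, h2⟩ := (domain_subset_Icc_iff (hne j)).mp hj
      exact Finset.Icc_subset_Icc h1 h2 (hdom j)
    constructor
    · intro a b
      cases isEmpty_or_nonempty (Fin n) with
      | inl h =>
        simp [Finset.univ_eq_empty]
      | inr h =>
        obtain ⟨i0⟩ := h
        obtain ⟨d, -, hdom, hinj⟩ := hBC i0 ((D i0).min' (hne i0))
          (Finset.mem_insert_self _ _)
        calc (Finset.univ.filter (fun j : Fin n => D j ⊆ Finset.Icc a b)).card
            = ((Finset.univ.filter (fun j : Fin n => D j ⊆ Finset.Icc a b)).image d).card :=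
              (Finset.card_image_of_injective _ hinj).symm
          _ ≤ (Finset.Icc a b).card := by
              apply Finset.card_le_card
              intro x hx
              obtain ⟨j, hj, rfl⟩ := Finset.mem_image.mp hx
              exact image_sub d hdom a b j (Finset.mem_filter.mp hj).2
    · intro a b hHall i hni
      rw [Finset.eq_empty_iff_forall_notMem]
      intro x hx
      rw [Finset.mem_inter] at hx
      obtain ⟨hx1, hx2⟩ := hx
      obtain ⟨d, hdi, hdom, hinj⟩ := hBC i x hx1
      set F := Finset.univ.filter (fun j : Fin n => D j ⊆ Finset.Icc a b) with hF
      have hiF : i ∉ F := by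
        rw [hF, Finset.mem_filter]
        exact fun h => hni h.2
      have himg : (insert i F).image d ⊆ Finset.Icc a b := by
        intro y hy
        obtain ⟨j, hj, rfl⟩ := Finset.mem_image.mp hy
        rcases Finset.mem_insert.mp hj with rfl | hj'
        · rw [hdi]; exact hx2
        · exact image_sub d hdom a b j (Finset.mem_filter.mp hj').2
      have : F.card + 1 ≤ (Finset.Icc a b).card := by
        calc F.card + 1 = (insert i F).card := (Finset.card_insert_of_notMem hiF).symm
          _ = ((insert i F).image d).card := (Finset.card_image_of_injective _ hinj).symm
          _ ≤ (Finset.Icc a b).card := Finset.card_le_card himg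
      omega
  · rintro ⟨h1, h2⟩ i v hv
    set l : Fin n → ℤ := fun j => (D j).min' (hne j) with hl
    set u : Fin n → ℤ := fun j => (D j).max' (hne j) with hu
    have hv' : v = l i ∨ v = u i := by
      rcases Finset.mem_insert.mp hv with h | h
      · exact Or.inl h
      · exact Or.inr (Finset.mem_singleton.mp h)
    have hmm : ∀ j, (D j).min' (hne j) ≤ (D j).max' (hne j) :=
      fun j => Finset.min'_le _ _ ((D j).max'_mem (hne j))
    have hvmem : l i ≤ v ∧ v ≤ u i := by
      rcases hv' with rfl | rfl
      · exact ⟨le_refl _, hmm i⟩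
      · exact ⟨hmm i, le_refl _⟩
    set l' : Fin n → ℤ := Function.update l i v with hl'
    set u' : Fin n → ℤ := Function.update u i v with hu'
    have hl'u' : ∀ j, l' j ≤ u' j := by
      intro j
      by_cases hj : j = i
      · subst hj
        rw [hl', hu', Function.update_self, Function.update_self]
      · rw [hl', hu', Function.update_of_ne hj, Function.update_of_ne hj]
        exact hmm j
    have hfilter_eq : ∀ a b : ℤ,
        Finset.univ.filter (fun j : Fin n => a ≤ l j ∧ u j ≤ b) =
        Finset.univ.filter (fun j : Fin n => D j ⊆ Finset.Icc a b) := by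
      intro a b
      apply Finset.filter_congr
      intro j _
      exact (domain_subset_Icc_iff (hne j)).symm
    have H' : ∀ a b : ℤ, (Finset.univ.filter (fun j => a ≤ l' j ∧ u' j ≤ b)).card ≤
        (Finset.Icc a b).card := by
      intro a b
      set F := Finset.univ.filter (fun j : Fin n => a ≤ l j ∧ u j ≤ b) with hF
      have hFcard : F.card ≤ (Finset.Icc a b).card := by
        rw [hF, hfilter_eq]; exact h1 a b
      by_cases hvab : a ≤ v ∧ v ≤ b
      · by_cases hDi : a ≤ l i ∧ u i ≤ b
        · refine le_trans (Finset.card_le_card ?_) hFcard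
          intro j hj
          rw [Finset.mem_filter] at hj
          rw [hF, Finset.mem_filter]
          by_cases hji : j = i
          · subst hji; exact ⟨Finset.mem_univ _, hDi⟩
          · rw [hl', hu', Function.update_of_ne hji, Function.update_of_ne hji] at hj
            exact ⟨Finset.mem_univ _, hj.2⟩
        · have hnsub : ¬ D i ⊆ Finset.Icc a b := fun h =>
            hDi ((domain_subset_Icc_iff (hne i)).mp h)
          have hlt : F.card < (Finset.Icc a b).card := by
            rcases lt_or_eq_of_le hFcard with h | h
            · exact h
            · exfalso
              have := h2 a b (by rw [hF, hfilter_eq] at h; exact h.symm) i hnsub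
              have hvin : v ∈ ({(D i).min' (hne i), (D i).max' (hne i)} : Finset ℤ) ∩
                  Finset.Icc a b :=
                Finset.mem_inter.mpr ⟨hv, Finset.mem_Icc.mpr hvab⟩
              rw [this] at hvin
              exact Finset.notMem_empty v hvin
          have hsub : Finset.univ.filter (fun j => a ≤ l' j ∧ u' j ≤ b) ⊆ insert i F := by
            intro j hj
            rw [Finset.mem_filter] at hj
            by_cases hji : j = i
            · subst hji; exact Finset.mem_insert_self _ _
            · rw [hl', hu', Function.update_of_ne hji, Function.update_of_ne hji] at hj
              exact Finset.mem_insert_of_mem (Finset.mem_filter.mpr ⟨Finset.mem_univ _, hj.2⟩)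
          calc (Finset.univ.filter (fun j => a ≤ l' j ∧ u' j ≤ b)).card
              ≤ (insert i F).card := Finset.card_le_card hsub
            _ ≤ F.card + 1 := Finset.card_insert_le _ _
            _ ≤ (Finset.Icc a b).card := by omega
      · refine le_trans (Finset.card_le_card ?_) hFcard
        intro j hj
        rw [Finset.mem_filter] at hj
        by_cases hji : j = i
        · subst hji
          rw [hl', hu', Function.update_self, Function.update_self] at hj
          exact absurd hj.2 hvab
        · rw [hl', hu', Function.update_of_ne hji, Function.update_of_ne hji] at hj
          rw [hF, Finset.mem_filter]
          exact ⟨Finset.mem_univ _, hj.2⟩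
    have hHall := interval_hall l' u' hl'u' H'
    obtain ⟨f, hfinj, hfmem⟩ :=
      (Finset.all_card_le_biUnion_card_iff_exists_injective
        (fun j => Finset.Icc (l' j) (u' j))).mp hHall
    refine ⟨f, ?_, ?_, hfinj⟩
    · have := hfmem i
      rw [hl', hu', Function.update_self, Function.update_self, Finset.Icc_self,
        Finset.mem_singleton] at this
      exact this
    · intro j
      by_cases hji : j = i
      · subst hji
        have := hfmem j
        rw [hl', hu', Function.update_self, Function.update_self, Finset.Icc_self,
          Finset.mem_singleton] at this
        rw [this]
        exact Finset.mem_Icc.mpr hvmem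
      · have := hfmem j
        rw [hl', hu', Function.update_of_ne hji, Function.update_of_ne hji] at this
        exact this
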